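/- Bound on Taylor coefficients of the CSI ratio: if |c_l| = 1 for every l ∈ Fin L, then for every k ≥ 1, every tuple (l₁,…,l_k) ∈ (Fin L)^k, and every z ∈ ℂ^L with D(z) ≠ 0, one has |(1/k!) · ∂^k f / ∂z_{l₁}⋯∂z_{l_k}(z)| ≤ (|N(z)| + |D(z)|) / |D(z)|^{k+1}. -/

import Mathlib

open scoped BigOperators

/-- Numerator `N(z) = A + Σ_l z_l` of the CSI ratio. -/
noncomputable def Nfun (L : ℕ) (A : ℂ) (z : Fin L → ℂ) : ℂ := A + ∑ l, z l

/-- Denominator `D(z) = B + Σ_l c_l z_l` of the CSI ratio. -/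
noncomputable def Dfun (L : ℕ) (B : ℂ) (c : Fin L → ℂ) (z : Fin L → ℂ) : ℂ :=
  B + ∑ l, c l * z l

/-- The CSI ratio `f(z) = N(z)/D(z)`. -/
noncomputable def ffun (L : ℕ) (A B : ℂ) (c : Fin L → ℂ) (z : Fin L → ℂ) : ℂ :=
  Nfun L A z / Dfun L B c z

/-! Auxiliary machinery -/

/-- The linear part of `Nfun`. -/
noncomputable def LNmap (L : ℕ) : (Fin L → ℂ) →L[ℂ] ℂ :=
  ∑ j, ContinuousLinearMap.proj j

/-- The linear part of `Dfun`. -/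
noncomputable def LDmap (L : ℕ) (c : Fin L → ℂ) : (Fin L → ℂ) →L[ℂ] ℂ :=
  ∑ j, c j • ContinuousLinearMap.proj j

lemma LNmap_apply (L : ℕ) (y : Fin L → ℂ) : LNmap L y = ∑ j, y j := by
  simp [LNmap]

lemma LDmap_apply (L : ℕ) (c : Fin L → ℂ) (y : Fin L → ℂ) :
    LDmap L c y = ∑ j, c j * y j := by
  simp [LDmap]

lemma LNmap_single (L : ℕ) (j : Fin L) : LNmap L (Pi.single j 1) = 1 := by
  rw [LNmap_apply]
  simp [Pi.single_apply]

lemma LDmap_single (L : ℕ) (c : Fin L → ℂ) (j : Fin L) :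
    LDmap L c (Pi.single j 1) = c j := by
  rw [LDmap_apply]
  simp [Pi.single_apply]

lemma hasFDerivAt_Nfun (L : ℕ) (A : ℂ) (z : Fin L → ℂ) :
    HasFDerivAt (Nfun L A) (LNmap L) z := by
  have h : Nfun L A = fun y => A + LNmap L y := by
    funext y; rw [LNmap_apply]; rfl
  rw [h]
  exact (LNmap L).hasFDerivAt.const_add A

lemma hasFDerivAt_Dfun (L : ℕ) (B : ℂ) (c : Fin L → ℂ) (z : Fin L → ℂ) :
    HasFDerivAt (Dfun L B c) (LDmap L c) z := by
  have h : Dfun L B c = fun y => B + LDmap L c y := by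
    funext y; rw [LDmap_apply]; rfl
  rw [h]
  exact (LDmap L c).hasFDerivAt.const_add B

/-- Derivative of the building-block function `u·N/D^(m+1) + v/D^m`. -/
lemma ratio_hasFDerivAt (L : ℕ) (A B : ℂ) (c : Fin L → ℂ) (m : ℕ) (u v : ℂ)
    (z : Fin L → ℂ) (hz : Dfun L B c z ≠ 0) :
    ∃ G : (Fin L → ℂ) →L[ℂ] ℂ,
      HasFDerivAt
        (fun y => u * Nfun L A y / Dfun L B c y ^ (m + 1) + v / Dfun L B c y ^ m) G z ∧
      ∀ j : Fin L, G (Pi.single j 1) =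
        u / Dfun L B c z ^ (m + 1)
          - (m + 1) * u * c j * Nfun L A z / Dfun L B c z ^ (m + 2)
          - m * v * c j / Dfun L B c z ^ (m + 1) := by
  have hN := hasFDerivAt_Nfun L A z
  have hD := hasFDerivAt_Dfun L B c z
  -- inverse powers of D
  have h1 : HasDerivAt (fun t : ℂ => (t ^ (m + 1))⁻¹)
      (-((m + 1 : ℂ) * Dfun L B c z ^ m) / (Dfun L B c z ^ (m + 1)) ^ 2) (Dfun L B c z) := by
    have := (hasDerivAt_pow (m + 1) (Dfun L B c z)).inv (pow_ne_zero _ hz)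
    simp at this; exact this
  have h2 : HasDerivAt (fun t : ℂ => (t ^ m)⁻¹)
      (-((m : ℂ) * Dfun L B c z ^ (m - 1)) / (Dfun L B c z ^ m) ^ 2) (Dfun L B c z) := by
    have := (hasDerivAt_pow m (Dfun L B c z)).inv (pow_ne_zero _ hz)
    exact this
  have hinv1 : HasFDerivAt (fun y => (Dfun L B c y ^ (m + 1))⁻¹)
      ((-((m + 1 : ℂ) * Dfun L B c z ^ m) / (Dfun L B c z ^ (m + 1)) ^ 2) • LDmap L c) z :=
    h1.comp_hasFDerivAt z hD
  have hinv2 : HasFDerivAt (fun y => (Dfun L B c y ^ m)⁻¹)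
      ((-((m : ℂ) * Dfun L B c z ^ (m - 1)) / (Dfun L B c z ^ m) ^ 2) • LDmap L c) z :=
    h2.comp_hasFDerivAt z hD
  have hterm1 : HasFDerivAt (fun y => (u * Nfun L A y) * (Dfun L B c y ^ (m + 1))⁻¹)
      ((u * Nfun L A z) • ((-((m + 1 : ℂ) * Dfun L B c z ^ m) /
          (Dfun L B c z ^ (m + 1)) ^ 2) • LDmap L c)
        + (Dfun L B c z ^ (m + 1))⁻¹ • (u • LNmap L)) z :=
    (hN.const_mul u).mul hinv1
  have hterm2 : HasFDerivAt (fun y => v * (Dfun L B c y ^ m)⁻¹)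
      (v • ((-((m : ℂ) * Dfun L B c z ^ (m - 1)) / (Dfun L B c z ^ m) ^ 2) • LDmap L c)) z :=
    hinv2.const_mul v
  refine ⟨((u * Nfun L A z) • ((-((m + 1 : ℂ) * Dfun L B c z ^ m) /
          (Dfun L B c z ^ (m + 1)) ^ 2) • LDmap L c)
        + (Dfun L B c z ^ (m + 1))⁻¹ • (u • LNmap L))
      + (v • ((-((m : ℂ) * Dfun L B c z ^ (m - 1)) / (Dfun L B c z ^ m) ^ 2) • LDmap L c)),
      ?_, ?_⟩
  · have := hterm1.add hterm2
    simp only [div_eq_mul_inv] at this ⊢; exact this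
  · intro j
    simp only [ContinuousLinearMap.add_apply, ContinuousLinearMap.smul_apply,
      LNmap_single, LDmap_single, smul_eq_mul]
    rcases m with _ | m'
    · push_cast
      field_simp
      ring
    · have hm : (m' + 1 : ℕ) - 1 = m' := rfl
      rw [hm]
      push_cast
      field_simp
      ring

/-- Key structural lemma: explicit form of the iterated derivatives of the CSI ratio. -/
lemma csi_key (L : ℕ) (A B : ℂ) (c : Fin L → ℂ) (hc : ∀ l, ‖c l‖ = 1) :
    ∀ k : ℕ, 1 ≤ k → ∀ l : Fin k → Fin L, ∃ u v : ℂ, ‖u‖ ≤ 1 ∧ ‖v‖ ≤ 1 ∧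
      ∀ z : Fin L → ℂ, Dfun L B c z ≠ 0 →
        iteratedFDeriv ℂ k (ffun L A B c) z (fun i => Pi.single (l i) 1) =
          (k.factorial : ℂ) *
            (u * Nfun L A z / Dfun L B c z ^ (k + 1) + v / Dfun L B c z ^ k) := by
  intro k hk
  induction k, hk using Nat.le_induction with
  | base =>
    intro l
    refine ⟨-c (l 0), 1, by simp [hc], by norm_num, ?_⟩
    intro z hz
    obtain ⟨G, hG, hGs⟩ := ratio_hasFDerivAt L A B c 0 1 0 z hz
    have hfe : ffun L A B c =
        (fun y => 1 * Nfun L A y / Dfun L B c y ^ (0 + 1) + 0 / Dfun L B c y ^ 0) := by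
      funext y; simp [ffun]
    rw [iteratedFDeriv_one_apply, hfe, hG.fderiv, hGs (l 0)]
    have h0 := hz
    push_cast
    field_simp
    ring
  | succ n hn ih =>
    intro l
    obtain ⟨u, v, hu, hv, hval⟩ := ih (fun i => l i.succ)
    have hc0 : ‖c (l 0)‖ = 1 := hc (l 0)
    refine ⟨-c (l 0) * u, (u - (n : ℂ) * v * c (l 0)) / ((n : ℂ) + 1), ?_, ?_, ?_⟩
    · rw [norm_mul, norm_neg, hc0, one_mul]; exact hu
    · have hnn : ‖((n : ℂ) + 1)‖ = (n : ℝ) + 1 := by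
        have : ((n : ℂ) + 1) = ((n + 1 : ℕ) : ℂ) := by push_cast; ring
        rw [this, Complex.norm_natCast]; push_cast; ring
      rw [norm_div, hnn, div_le_one (by positivity)]
      calc ‖u - (n : ℂ) * v * c (l 0)‖ ≤ ‖u‖ + ‖(n : ℂ) * v * c (l 0)‖ := norm_sub_le _ _
        _ = ‖u‖ + (n : ℝ) * ‖v‖ * ‖c (l 0)‖ := by
            rw [norm_mul, norm_mul, Complex.norm_natCast]
        _ ≤ 1 + (n : ℝ) * 1 * 1 := by
            refine add_le_add hu ?_
            refine mul_le_mul (mul_le_mul le_rfl hv (norm_nonneg _) (by positivity)) ?_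
              (norm_nonneg _) (by positivity)
            exact le_of_eq hc0
        _ = (n : ℝ) + 1 := by ring
    · intro z hz
      set S : Set (Fin L → ℂ) := {y | Dfun L B c y ≠ 0} with hSdef
      have hSo : IsOpen S := by
        have hcont : Continuous (Dfun L B c) :=
          continuous_const.add (continuous_finset_sum _ fun j _ =>
            continuous_const.mul (continuous_apply j))
        exact isOpen_compl_singleton.preimage hcont
      have hzS : z ∈ S := hz
      have hsmooth : ContDiffOn ℂ ⊤ (ffun L A B c) S := by
        have hNcd : ContDiff ℂ ⊤ (Nfun L A) := by
          have h : Nfun L A = fun y => A + LNmap L y := by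
            funext y; rw [LNmap_apply]; rfl
          rw [h]; exact contDiff_const.add (LNmap L).contDiff
        have hDcd : ContDiff ℂ ⊤ (Dfun L B c) := by
          have h : Dfun L B c = fun y => B + LDmap L c y := by
            funext y; rw [LDmap_apply]; rfl
          rw [h]; exact contDiff_const.add (LDmap L c).contDiff
        exact hNcd.contDiffOn.div hDcd.contDiffOn fun y hy => hy
      have hdiff : DifferentiableWithinAt ℂ
          (iteratedFDerivWithin ℂ n (ffun L A B c) S) S z :=
        (hsmooth.differentiableOn_iteratedFDerivWithin
          (by simp) hSo.uniqueDiffOn) z hzS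
      set M : Fin (n + 1) → (Fin L → ℂ) := fun i => Pi.single (l i) 1 with hM
      have htail : Fin.tail M = fun i : Fin n => Pi.single (l i.succ) 1 := rfl
      -- pass to the within-version
      have e1 : iteratedFDeriv ℂ (n + 1) (ffun L A B c) z M =
          iteratedFDerivWithin ℂ (n + 1) (ffun L A B c) S z M := by
        rw [iteratedFDerivWithin_of_isOpen (n + 1) hSo hzS]
      rw [e1, iteratedFDerivWithin_succ_apply_left]
      -- commute the application of the tail directions with the derivative
      have hcomm : (fderivWithin ℂ (iteratedFDerivWithin ℂ n (ffun L A B c) S) S z (M 0))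
            (Fin.tail M) =
          fderivWithin ℂ
            (fun y => iteratedFDerivWithin ℂ n (ffun L A B c) S y (Fin.tail M)) S z (M 0) := by
        set Φ := ContinuousMultilinearMap.apply ℂ (fun _ : Fin n => (Fin L → ℂ)) ℂ (Fin.tail M)
        have h' : HasFDerivWithinAt
            (fun y => iteratedFDerivWithin ℂ n (ffun L A B c) S y (Fin.tail M))
            (Φ.comp (fderivWithin ℂ (iteratedFDerivWithin ℂ n (ffun L A B c) S) S z)) S z :=
          Φ.hasFDerivAt.comp_hasFDerivWithinAt z hdiff.hasFDerivWithinAt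
        rw [h'.fderivWithin (hSo.uniqueDiffOn z hzS)]
        rfl
      rw [hcomm, fderivWithin_of_isOpen hSo hzS]
      -- identify the inner function with the explicit formula, near z
      have heq : (fun y => iteratedFDerivWithin ℂ n (ffun L A B c) S y (Fin.tail M)) =ᶠ[nhds z]
          (fun y => (n.factorial : ℂ) *
            (u * Nfun L A y / Dfun L B c y ^ (n + 1) + v / Dfun L B c y ^ n)) := by
        filter_upwards [hSo.mem_nhds hzS] with y hy
        rw [htail]
        rw [iteratedFDerivWithin_of_isOpen n hSo hy]
        exact hval y hy
      rw [heq.fderiv_eq]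
      obtain ⟨G, hG, hGs⟩ := ratio_hasFDerivAt L A B c n u v z hz
      have hG' : HasFDerivAt (fun y => (n.factorial : ℂ) *
          (u * Nfun L A y / Dfun L B c y ^ (n + 1) + v / Dfun L B c y ^ n))
          ((n.factorial : ℂ) • G) z := hG.const_mul _
      rw [hG'.fderiv]
      have hM0 : M 0 = Pi.single (l 0) 1 := rfl
      rw [ContinuousLinearMap.smul_apply, hM0, hGs (l 0), smul_eq_mul]
      -- final algebra
      have hfac : ((n + 1).factorial : ℂ) = ((n : ℂ) + 1) * (n.factorial : ℂ) := by
        rw [Nat.factorial_succ]; push_cast; ring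
      have hn1 : ((n : ℂ) + 1) ≠ 0 := by
        intro h; norm_cast at h
      rw [hfac]
      push_cast
      field_simp
      ring

/-- Bound on the Taylor coefficients of the CSI ratio: if `|c_l| = 1` for all `l`,
then for `k ≥ 1`, any tuple `(l₁,…,l_k)` and any `z` with `D(z) ≠ 0`,
`|(1/k!) ∂^k f/∂z_{l₁}⋯∂z_{l_k}(z)| ≤ (|N(z)| + |D(z)|) / |D(z)|^{k+1}`. -/
theorem csi_ratio_taylor_coeff_bound
    (L : ℕ) (hL : 1 ≤ L) (A B : ℂ) (c : Fin L → ℂ)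
    (hc : ∀ l, ‖c l‖ = 1)
    (k : ℕ) (hk : 1 ≤ k) (l : Fin k → Fin L)
    (z : Fin L → ℂ) (hD : Dfun L B c z ≠ 0) :
    ‖(k.factorial : ℂ)⁻¹ *
        iteratedFDeriv ℂ k (ffun L A B c) z (fun i => Pi.single (l i) 1)‖ ≤
      (‖Nfun L A z‖ + ‖Dfun L B c z‖) / ‖Dfun L B c z‖ ^ (k + 1) := by
  obtain ⟨u, v, hu, hv, hval⟩ := csi_key L A B c hc k hk l
  rw [hval z hD, ← mul_assoc, inv_mul_cancel₀ (by exact_mod_cast k.factorial_ne_zero), one_mul]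
  have hDpos : 0 < ‖Dfun L B c z‖ := norm_pos_iff.mpr hD
  calc ‖u * Nfun L A z / Dfun L B c z ^ (k + 1) + v / Dfun L B c z ^ k‖
      ≤ ‖u * Nfun L A z / Dfun L B c z ^ (k + 1)‖ + ‖v / Dfun L B c z ^ k‖ := norm_add_le _ _
    _ = ‖u‖ * ‖Nfun L A z‖ / ‖Dfun L B c z‖ ^ (k + 1) + ‖v‖ / ‖Dfun L B c z‖ ^ k := by
        rw [norm_div, norm_div, norm_mul, norm_pow, norm_pow]
    _ ≤ 1 * ‖Nfun L A z‖ / ‖Dfun L B c z‖ ^ (k + 1) + 1 / ‖Dfun L B c z‖ ^ k := by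
        gcongr
    _ = (‖Nfun L A z‖ + ‖Dfun L B c z‖) / ‖Dfun L B c z‖ ^ (k + 1) := by
        rw [one_mul, add_div]
        congr 1
        rw [pow_succ', div_mul_eq_div_div, div_self hDpos.ne']
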